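/- arXiv:2511.07100 — 3 statements merged into one kernel-verified Lean document; each statement's English description precedes it below -/
import Mathlib

section
/- Let R: [N, ∞) → ℝ satisfy |R(x)| ≪ x/(log x)^{3/2+ε} with N > e^e, and T ≥ 1. Then ∫_N^∞ ∫_N^{x/2} (|R(x)R(y)|/(x y)²) · s²(2T log(x/y)) dy dx ≪ T^{−2} (log N)^{−1−2ε}, where s(u) = sin(u)/u. -/
open Filter MeasureTheory Set


lemma helper_int {b N : ℝ} (hb : 1 < b) (hN1 : 1 < N) :
    MeasureTheory.IntegrableOn (fun x => Real.log x ^ (-b) / x) (Set.Ioi N) ∧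
    ∫ x in Set.Ioi N, Real.log x ^ (-b) / x = Real.log N ^ (1 - b) / (b - 1) := by
  have hN0 : 0 < N := lt_trans one_pos hN1
  set g : ℝ → ℝ := fun x => Real.log x ^ (1 - b) / (1 - b) with hg
  have hderiv : ∀ x ∈ Set.Ioi N, HasDerivAt g (Real.log x ^ (-b) / x) x := by
    intro x hx
    have hx1 : 1 < x := lt_trans hN1 hx
    have hx0 : 0 < x := lt_trans one_pos hx1
    have hlx : 0 < Real.log x := Real.log_pos hx1
    have h1 : HasDerivAt (fun y => Real.log y ^ (1 - b)) (x⁻¹ * (1 - b) * Real.log x ^ (1 - b - 1)) x :=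
      (Real.hasDerivAt_log (ne_of_gt hx0)).rpow_const (Or.inl (ne_of_gt hlx))
    have h2 := h1.div_const (1 - b)
    refine h2.congr_deriv ?_
    have hb0 : (1 : ℝ) - b ≠ 0 := by linarith
    have : 1 - b - 1 = -b := by ring
    rw [this]
    field_simp
  have hcont : ContinuousWithinAt g (Set.Ici N) N := by
    apply ContinuousAt.continuousWithinAt
    have hlx : 0 < Real.log N := Real.log_pos hN1
    exact ((Real.continuousAt_log (ne_of_gt hN0)).rpow_const (Or.inl (ne_of_gt hlx))).div_const _
  have hpos : ∀ x ∈ Set.Ioi N, 0 ≤ Real.log x ^ (-b) / x := by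
    intro x hx
    have hx1 : 1 < x := lt_trans hN1 hx
    have hx0 : 0 < x := lt_trans one_pos hx1
    have hlx : 0 < Real.log x := Real.log_pos hx1
    positivity
  have htend : Tendsto g atTop (nhds 0) := by
    have h1 : Tendsto (fun x : ℝ => x ^ (1 - b)) atTop (nhds 0) := by
      have := tendsto_rpow_neg_atTop (show (0:ℝ) < b - 1 by linarith)
      simpa [neg_sub] using this
    have h2 := (h1.comp Real.tendsto_log_atTop).div_const (1 - b)
    simpa using h2
  have hint : MeasureTheory.IntegrableOn (fun x => Real.log x ^ (-b) / x) (Set.Ioi N) :=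
    integrableOn_Ioi_deriv_of_nonneg hcont hderiv hpos htend
  refine ⟨hint, ?_⟩
  rw [MeasureTheory.integral_Ioi_of_hasDerivAt_of_tendsto hcont hderiv hint htend]
  rw [hg, zero_sub, neg_div', div_eq_div_iff (by linarith) (by linarith : b - 1 ≠ 0)]
  ring


lemma helper_pt (ε C₀ N T x y : ℝ) (hε : 0 < ε) (hC₀ : 0 < C₀)
    (hN : Real.exp (Real.exp 1) < N) (hT : 1 ≤ T)
    (R : ℝ → ℝ) (hR : ∀ z : ℝ, N ≤ z → |R z| ≤ C₀ * z / Real.log z ^ (3 / 2 + ε))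
    (hx : x ∈ Set.Ioi N) (hy : y ∈ Set.Ioc N (x / 2)) :
    |R x * R y| / (x * y) ^ 2 *
        (Real.sin (2 * T * Real.log (x / y)) / (2 * T * Real.log (x / y))) ^ 2
      ≤ (C₀ ^ 2 / (4 * Real.log 2 ^ 2 * T ^ 2)) * (Real.log x ^ (-(3 / 2 + ε)) / x)
          * (Real.log y ^ (-(3 / 2 + ε)) / y) := by
  have hN1 : (1 : ℝ) < N := by
    nlinarith [Real.add_one_le_exp (Real.exp 1), Real.add_one_le_exp (1 : ℝ)]
  have hx1 : 1 < x := lt_trans hN1 hx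
  have hx0 : 0 < x := lt_trans one_pos hx1
  have hy1 : 1 < y := lt_trans hN1 hy.1
  have hy0 : 0 < y := lt_trans one_pos hy1
  have hlx : 0 < Real.log x := Real.log_pos hx1
  have hly : 0 < Real.log y := Real.log_pos hy1
  have hL2 : 0 < Real.log 2 := Real.log_pos one_lt_two
  have hT0 : 0 < T := lt_of_lt_of_le one_pos hT
  have hxy : 2 ≤ x / y := (le_div_iff₀ hy0).2 (by linarith [hy.2])
  have hlxy : Real.log 2 ≤ Real.log (x / y) := Real.log_le_log (by norm_num) hxy
  set u := 2 * T * Real.log (x / y) with hu_def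
  have hu : 2 * T * Real.log 2 ≤ u := by
    have : 0 < 2 * T := by linarith
    exact mul_le_mul_of_nonneg_left hlxy this.le
  have hu0 : 0 < u := lt_of_lt_of_le (by positivity) hu
  -- sine factor bound
  have hS : (Real.sin u / u) ^ 2 ≤ 1 / (4 * Real.log 2 ^ 2 * T ^ 2) := by
    rw [div_pow]
    calc Real.sin u ^ 2 / u ^ 2 ≤ 1 / u ^ 2 :=
          div_le_div₀ zero_le_one (Real.sin_sq_le_one u) (by positivity) le_rfl
      _ ≤ 1 / (4 * Real.log 2 ^ 2 * T ^ 2) := by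
          apply one_div_le_one_div_of_le (by positivity)
          nlinarith [mul_le_mul hu hu (by positivity : (0:ℝ) ≤ 2 * T * Real.log 2) hu0.le]
  -- R factor bound
  have hA : |R x * R y| / (x * y) ^ 2
      ≤ ((C₀ * x / Real.log x ^ (3 / 2 + ε)) * (C₀ * y / Real.log y ^ (3 / 2 + ε))) / (x * y) ^ 2 := by
    gcongr
    rw [abs_mul]
    have hpx : 0 < Real.log x ^ (3 / 2 + ε) := Real.rpow_pos_of_pos hlx _
    exact mul_le_mul (hR x hx.le) (hR y hy.1.le) (abs_nonneg _) (by positivity)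
  have key : |R x * R y| / (x * y) ^ 2 * (Real.sin u / u) ^ 2
      ≤ (((C₀ * x / Real.log x ^ (3 / 2 + ε)) * (C₀ * y / Real.log y ^ (3 / 2 + ε))) / (x * y) ^ 2)
          * (1 / (4 * Real.log 2 ^ 2 * T ^ 2)) := by
    apply mul_le_mul hA hS (sq_nonneg _)
    have hpx : 0 < Real.log x ^ (3 / 2 + ε) := Real.rpow_pos_of_pos hlx _
    have hpy : 0 < Real.log y ^ (3 / 2 + ε) := Real.rpow_pos_of_pos hly _
    positivity
  refine key.trans_eq ?_
  have hpx : (0:ℝ) < Real.log x ^ (3 / 2 + ε) := Real.rpow_pos_of_pos hlx _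
  have hpy : (0:ℝ) < Real.log y ^ (3 / 2 + ε) := Real.rpow_pos_of_pos hly _
  rw [Real.rpow_neg hlx.le, Real.rpow_neg hly.le]
  field_simp

/-- the 'first range' Fejér-kernel estimate: if
`|R(x)| ≪ x/(log x)^(3/2+ε)` on `[N, ∞)` with `N > e^e` and `T ≥ 1`, then
`∫_N^∞ ∫_N^{x/2} (|R(x)R(y)|/(xy)²) s²(2T log(x/y)) dy dx ≪ T^{−2} (log N)^{−1−2ε}`. -/
theorem stmt_9 (ε C₀ : ℝ) (hε : 0 < ε) (hC₀ : 0 < C₀) :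
    ∃ C : ℝ, 0 < C ∧ ∀ N T : ℝ, Real.exp (Real.exp 1) < N → 1 ≤ T →
      ∀ R : ℝ → ℝ, (∀ x : ℝ, N ≤ x → |R x| ≤ C₀ * x / Real.log x ^ (3 / 2 + ε)) →
      (∫ x in Set.Ioi N, ∫ y in Set.Ioc N (x / 2),
          |R x * R y| / (x * y) ^ 2 *
            (Real.sin (2 * T * Real.log (x / y)) / (2 * T * Real.log (x / y))) ^ 2)
        ≤ C / T ^ 2 * Real.log N ^ (-(1 : ℝ) - 2 * ε) := by
  have hL2 : 0 < Real.log 2 := Real.log_pos one_lt_two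
  refine ⟨C₀ ^ 2 / (4 * Real.log 2 ^ 2 * (1 / 2 + ε) ^ 2), by positivity, ?_⟩
  intro N T hN hT R hR
  have hN1 : (1 : ℝ) < N := by
    nlinarith [Real.add_one_le_exp (Real.exp 1), Real.add_one_le_exp (1 : ℝ)]
  have hT0 : 0 < T := lt_of_lt_of_le one_pos hT
  have hLN : 0 < Real.log N := Real.log_pos hN1
  have hb : (1 : ℝ) < 3 / 2 + ε := by linarith
  obtain ⟨hint, hval⟩ := helper_int hb hN1
  set ψ : ℝ → ℝ := fun z => Real.log z ^ (-(3 / 2 + ε)) / z with hψ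
  set J : ℝ := Real.log N ^ (1 - (3 / 2 + ε)) / (3 / 2 + ε - 1) with hJ
  have hJ0 : 0 ≤ J := by
    rw [hJ]
    apply div_nonneg (Real.rpow_nonneg hLN.le _) (by linarith)
  set D : ℝ := C₀ ^ 2 / (4 * Real.log 2 ^ 2 * T ^ 2) with hD
  have hD0 : 0 ≤ D := by rw [hD]; positivity
  have hψnn : ∀ z ∈ Set.Ioi N, 0 ≤ ψ z := by
    intro z hz
    have hz1 : 1 < z := lt_trans hN1 hz
    have hz0 : 0 < z := lt_trans one_pos hz1
    have hlz : 0 < Real.log z := Real.log_pos hz1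
    rw [hψ]; positivity
  have hψnn_ae : 0 ≤ᵐ[volume.restrict (Set.Ioi N)] ψ :=
    (ae_restrict_iff' measurableSet_Ioi).2 (Filter.Eventually.of_forall hψnn)
  have hinner : ∀ x ∈ Set.Ioi N,
      (∫ y in Set.Ioc N (x / 2), |R x * R y| / (x * y) ^ 2 *
          (Real.sin (2 * T * Real.log (x / y)) / (2 * T * Real.log (x / y))) ^ 2)
        ≤ D * J * ψ x := by
    intro x hx
    have hxψ : 0 ≤ ψ x := hψnn x hx
    have hsub : Set.Ioc N (x / 2) ⊆ Set.Ioi N := Set.Ioc_subset_Ioi_self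
    have hgi : IntegrableOn (fun y => D * ψ x * ψ y) (Set.Ioc N (x / 2)) :=
      (hint.mono_set hsub).const_mul _
    calc (∫ y in Set.Ioc N (x / 2), |R x * R y| / (x * y) ^ 2 *
          (Real.sin (2 * T * Real.log (x / y)) / (2 * T * Real.log (x / y))) ^ 2)
        ≤ ∫ y in Set.Ioc N (x / 2), D * ψ x * ψ y := by
          apply integral_mono_of_nonneg
          · exact Filter.Eventually.of_forall fun y => by positivity
          · exact hgi
          · refine (ae_restrict_iff' measurableSet_Ioc).2 (Filter.Eventually.of_forall fun y hy => ?_)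
            have h := helper_pt ε C₀ N T x y hε hC₀ hN hT R hR hx hy
            calc |R x * R y| / (x * y) ^ 2 *
                (Real.sin (2 * T * Real.log (x / y)) / (2 * T * Real.log (x / y))) ^ 2 ≤ _ := h
              _ = D * ψ x * ψ y := by rw [hD, hψ]
      _ = D * ψ x * ∫ y in Set.Ioc N (x / 2), ψ y := MeasureTheory.integral_const_mul _ _
      _ ≤ D * ψ x * J := by
          apply mul_le_mul_of_nonneg_left _ (by positivity)
          calc (∫ y in Set.Ioc N (x / 2), ψ y) ≤ ∫ y in Set.Ioi N, ψ y :=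
                setIntegral_mono_set hint hψnn_ae (HasSubset.Subset.eventuallyLE hsub)
            _ = J := by rw [hψ, hval, hJ]
      _ = D * J * ψ x := by ring
  have houter : (∫ x in Set.Ioi N, ∫ y in Set.Ioc N (x / 2),
      |R x * R y| / (x * y) ^ 2 *
        (Real.sin (2 * T * Real.log (x / y)) / (2 * T * Real.log (x / y))) ^ 2)
      ≤ ∫ x in Set.Ioi N, D * J * ψ x := by
    apply integral_mono_of_nonneg
    · exact Filter.Eventually.of_forall fun x =>
        integral_nonneg fun y => by positivity
    · exact hint.const_mul _
    · exact (ae_restrict_iff' measurableSet_Ioi).2 (Filter.Eventually.of_forall hinner)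
  refine houter.trans ?_
  have : (∫ x in Set.Ioi N, D * J * ψ x) = D * J * J := by
    rw [MeasureTheory.integral_const_mul, hval]
  rw [this]
  have hpow : Real.log N ^ (1 - (3 / 2 + ε)) * Real.log N ^ (1 - (3 / 2 + ε))
      = Real.log N ^ (-(1 : ℝ) - 2 * ε) := by
    rw [← Real.rpow_add hLN]
    congr 1
    ring
  rw [hD, hJ]
  rw [div_mul_div_comm, div_mul_div_comm]
  rw [mul_assoc, hpow]
  apply le_of_eq
  have hne : (1 / 2 + ε : ℝ) ≠ 0 := by positivity
  have h32 : (3 / 2 + ε - 1 : ℝ) = 1 / 2 + ε := by ring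
  rw [h32]
  field_simp
end

section
/- Let b_j, c_j be sequences with |b_j| ≤ c_j and positive frequencies x_j strictly increasing, with ∑_j c_j²/x_j² < ∞. If the off-diagonal sum ∑_{x_j < x_k ≤ N} (c_j c_k)/(x_j x_k) |s(T log(x_k/x_j))| tends to 0 as N, T → ∞ with (log N)² = o(T), then lim (1/T)∫_0^T |∑_{x_j ≤ N} b_j x_j^{−1−it}|² dt = ∑_j b_j²/x_j² under the same joint limit. -/
open Filter Asymptotics

private lemma stmt18_cosint (T α : ℝ) (hT : T ≠ 0) :
    (1/T) * ∫ t in (0:ℝ)..T, Real.cos (α * t) =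
      if α = 0 then 1 else Real.sin (T*α) / (T*α) := by
  by_cases h : α = 0
  · simp [h, hT]
  · rw [if_neg h, intervalIntegral.integral_comp_mul_left Real.cos h]
    rw [integral_cos]
    simp only [mul_zero, Real.sin_zero, sub_zero, smul_eq_mul]
    field_simp

private lemma stmt18_term_eq (xj bj t : ℝ) (hxj : 0 < xj) :
    (bj : ℂ) / (xj : ℂ) ^ ((1 : ℂ) + t * Complex.I) =
      ((bj / xj : ℝ) : ℂ) * Complex.exp ((-(Real.log xj * t) : ℝ) * Complex.I) := by
  have hne : (xj : ℂ) ≠ 0 := by exact_mod_cast hxj.ne'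
  rw [Complex.cpow_def_of_ne_zero hne, ← Complex.ofReal_log hxj.le]
  have h1 : (Real.log xj : ℂ) * (1 + t * Complex.I) =
      (Real.log xj : ℂ) + ((Real.log xj * t : ℝ) : ℂ) * Complex.I := by
    push_cast; ring
  rw [h1, Complex.exp_add]
  have h2 : Complex.exp ((Real.log xj : ℂ)) = (xj : ℂ) := by
    rw [← Complex.ofReal_exp, Real.exp_log hxj]
  rw [h2]
  have h3 : ((-(Real.log xj * t) : ℝ) : ℂ) * Complex.I =
      -(((Real.log xj * t : ℝ) : ℂ) * Complex.I) := by push_cast; ring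
  rw [h3, Complex.exp_neg, Complex.ofReal_div]
  field_simp

private lemma stmt18_integrand_eq (x b : ℕ → ℝ) (hxpos : ∀ j, 0 < x j) (F : Finset ℕ)
    (t : ℝ) :
    ‖∑ j ∈ F, (b j : ℂ) / (x j : ℂ) ^ ((1 : ℂ) + t * Complex.I)‖ ^ 2 =
      ∑ j ∈ F, ∑ k ∈ F, (b j * b k) / (x j * x k) *
        Real.cos ((Real.log (x k) - Real.log (x j)) * t) := by
  have hterm : ∀ j, (b j : ℂ) / (x j : ℂ) ^ ((1 : ℂ) + t * Complex.I) =
      ((b j / x j : ℝ) : ℂ) * Complex.exp ((-(Real.log (x j) * t) : ℝ) * Complex.I) :=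
    fun j => stmt18_term_eq _ _ _ (hxpos j)
  simp only [hterm]
  set z : ℂ := ∑ j ∈ F, ((b j / x j : ℝ) : ℂ) *
      Complex.exp ((-(Real.log (x j) * t) : ℝ) * Complex.I) with hz
  have hre : z.re = ∑ j ∈ F, (b j / x j) * Real.cos (-(Real.log (x j) * t)) := by
    rw [hz, Complex.re_sum]
    exact Finset.sum_congr rfl fun j _ => by
      rw [Complex.re_ofReal_mul, Complex.exp_ofReal_mul_I_re]
  have him : z.im = ∑ j ∈ F, (b j / x j) * Real.sin (-(Real.log (x j) * t)) := by
    rw [hz, Complex.im_sum]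
    exact Finset.sum_congr rfl fun j _ => by
      rw [Complex.im_ofReal_mul, Complex.exp_ofReal_mul_I_im]
  have hnorm : ‖z‖ ^ 2 = z.re ^ 2 + z.im ^ 2 := by
    rw [Complex.sq_norm, Complex.normSq_apply]; ring
  rw [hnorm, hre, him, sq, sq, Finset.sum_mul_sum, Finset.sum_mul_sum,
    ← Finset.sum_add_distrib]
  refine Finset.sum_congr rfl fun j _ => ?_
  rw [← Finset.sum_add_distrib]
  refine Finset.sum_congr rfl fun k _ => ?_
  have h : (Real.log (x k) - Real.log (x j)) * t =
      (-(Real.log (x j) * t)) - (-(Real.log (x k) * t)) := by ring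
  rw [h, Real.cos_sub]
  ring

private lemma stmt18_intkey2 (x b : ℕ → ℝ) (F : Finset ℕ) (T : ℝ) (hT : T ≠ 0) :
    (1/T) * ∫ t in (0:ℝ)..T, ∑ j ∈ F, ∑ k ∈ F, (b j * b k) / (x j * x k) *
        Real.cos ((Real.log (x k) - Real.log (x j)) * t) =
      ∑ j ∈ F, ∑ k ∈ F, (b j * b k) / (x j * x k) *
        (if Real.log (x k) - Real.log (x j) = 0 then 1
         else Real.sin (T * (Real.log (x k) - Real.log (x j))) /
              (T * (Real.log (x k) - Real.log (x j)))) := by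
  have hint : ∀ (α c : ℝ), IntervalIntegrable
      (fun t : ℝ => c * Real.cos (α * t)) MeasureTheory.volume 0 T :=
    fun α c => ((continuous_const.mul
      (Real.continuous_cos.comp (continuous_const.mul continuous_id))).intervalIntegrable 0 T)
  have h1 : (∫ t in (0:ℝ)..T, ∑ j ∈ F, ∑ k ∈ F, (b j * b k) / (x j * x k) *
        Real.cos ((Real.log (x k) - Real.log (x j)) * t)) =
      ∑ j ∈ F, ∑ k ∈ F, ∫ t in (0:ℝ)..T, (b j * b k) / (x j * x k) *
        Real.cos ((Real.log (x k) - Real.log (x j)) * t) := by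
    have h2 : ∀ j ∈ F, IntervalIntegrable (fun t : ℝ => ∑ k ∈ F, (b j * b k) / (x j * x k) *
        Real.cos ((Real.log (x k) - Real.log (x j)) * t)) MeasureTheory.volume 0 T :=
      fun j _ => ((continuous_finset_sum F (fun k _ => continuous_const.mul
        (Real.continuous_cos.comp (continuous_const.mul continuous_id)))).intervalIntegrable 0 T)
    rw [intervalIntegral.integral_finset_sum h2]
    exact Finset.sum_congr rfl fun j _ =>
      intervalIntegral.integral_finset_sum (fun k _ => hint _ _)
  rw [h1, Finset.mul_sum]
  refine Finset.sum_congr rfl fun j _ => ?_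
  rw [Finset.mul_sum]
  refine Finset.sum_congr rfl fun k _ => ?_
  rw [intervalIntegral.integral_const_mul, ← stmt18_cosint T _ hT]
  ring

private lemma stmt18_intkey (x b : ℕ → ℝ) (hxpos : ∀ j, 0 < x j) (F : Finset ℕ) (T : ℝ)
    (hT : T ≠ 0) :
    (1/T) * ∫ t in (0:ℝ)..T,
        ‖∑ j ∈ F, (b j : ℂ) / (x j : ℂ) ^ ((1 : ℂ) + t * Complex.I)‖ ^ 2 =
      ∑ j ∈ F, ∑ k ∈ F, (b j * b k) / (x j * x k) *
        (if Real.log (x k) - Real.log (x j) = 0 then 1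
         else Real.sin (T * (Real.log (x k) - Real.log (x j))) /
              (T * (Real.log (x k) - Real.log (x j)))) := by
  have hfe : (fun t : ℝ => ‖∑ j ∈ F, (b j : ℂ) / (x j : ℂ) ^ ((1 : ℂ) + t * Complex.I)‖ ^ 2)
      = fun t => ∑ j ∈ F, ∑ k ∈ F, (b j * b k) / (x j * x k) *
        Real.cos ((Real.log (x k) - Real.log (x j)) * t) := by
    funext t; exact stmt18_integrand_eq x b hxpos F t
  rw [hfe]
  exact stmt18_intkey2 x b F T hT

/-- domination principle. If `|b j| ≤ c j`, `∑ c j²/x j² < ∞`,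
and the dominating off-diagonal sum
`∑_{x j < x k ≤ N} (c j c k)/(x j x k) |s(T log (x k/x j))|` tends to `0` as
`N, T → ∞` with `(log N)² = o(T)` (formalized via truncation functions `N(T)`),
then `(1/T)∫_0^T |∑_{x j ≤ N} b j x j^{−1−it}|² dt → ∑ b j²/x j²`
under the same joint limit. -/
theorem stmt_18
    (x b c : ℕ → ℝ)
    (hx : StrictMono x) (hxpos : ∀ j, 0 < x j) (hxt : Tendsto x atTop atTop)
    (hbc : ∀ j, |b j| ≤ c j)
    (hsum : Summable (fun j => c j ^ 2 / x j ^ 2))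
    (hoff : ∀ N : ℝ → ℝ, Tendsto N atTop atTop →
      (fun T : ℝ => Real.log (N T) ^ 2) =o[atTop] (fun T : ℝ => T) →
      Tendsto (fun T : ℝ =>
          ∑' j, ∑' k, if x j < x k ∧ x k ≤ N T then
            c j * c k / (x j * x k) *
              |Real.sin (T * Real.log (x k / x j)) / (T * Real.log (x k / x j))|
          else 0)
        atTop (nhds 0)) :
    ∀ N : ℝ → ℝ, Tendsto N atTop atTop →
      (fun T : ℝ => Real.log (N T) ^ 2) =o[atTop] (fun T : ℝ => T) →
      Tendsto (fun T : ℝ => (1 / T) *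
          ∫ t in (0:ℝ)..T,
            ‖∑' j, if x j ≤ N T then (b j : ℂ) / (x j : ℂ) ^ ((1 : ℂ) + t * Complex.I)
              else 0‖ ^ 2)
        atTop (nhds (∑' j, b j ^ 2 / x j ^ 2)) := by
  intro N hN hNo
  -- finiteness of truncation sets
  have hfin : ∀ y : ℝ, {j : ℕ | x j ≤ y}.Finite := by
    intro y
    obtain ⟨n, hn⟩ := Filter.eventually_atTop.mp (hxt.eventually_gt_atTop y)
    refine Set.Finite.subset (Set.finite_Iio n) (fun j hj => ?_)
    exact lt_of_not_ge fun hnj => absurd hj (not_le.2 (hn j hnj))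
  set F : ℝ → Finset ℕ := fun T => (hfin (N T)).toFinset with hF_def
  have hmem : ∀ T j, j ∈ F T ↔ x j ≤ N T := fun T j => (hfin (N T)).mem_toFinset
  -- summability of b² / x²
  have hb2 : Summable (fun j => b j ^ 2 / x j ^ 2) := by
    refine Summable.of_nonneg_of_le (fun j => by positivity) (fun j => ?_) hsum
    have h1 : b j ^ 2 ≤ c j ^ 2 := by
      rw [← sq_abs]
      exact pow_le_pow_left₀ (abs_nonneg _) (hbc j) 2
    gcongr
  set L := ∑' j, b j ^ 2 / x j ^ 2 with hL
  -- the truncation finsets tend to atTop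
  have hF : Tendsto F atTop atTop := by
    rw [Filter.tendsto_atTop]
    intro s
    obtain ⟨n, hn⟩ := s.exists_nat_subset_range
    filter_upwards [hN.eventually_ge_atTop (x n)] with T hT
    intro j hj
    refine (hmem T j).2 (le_trans ?_ hT)
    exact hx.monotone (le_of_lt (Finset.mem_range.1 (hn hj)))
  have hD : Tendsto (fun T => ∑ j ∈ F T, b j ^ 2 / x j ^ 2) atTop (nhds L) :=
    (hb2.hasSum).comp hF
  -- error term and dominating term
  set e : ℝ → ℕ → ℕ → ℝ := fun T j k => b j * b k / (x j * x k) *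
    (Real.sin (T * (Real.log (x k) - Real.log (x j))) /
      (T * (Real.log (x k) - Real.log (x j)))) with he_def
  set w : ℝ → ℕ → ℕ → ℝ := fun T j k => c j * c k / (x j * x k) *
    |Real.sin (T * (Real.log (x k) - Real.log (x j))) /
      (T * (Real.log (x k) - Real.log (x j)))| with hw_def
  set E : ℝ → ℝ := fun T => ∑ j ∈ F T, ∑ k ∈ F T, if j = k then 0 else e T j k with hE_def
  set off : ℝ → ℝ := fun T =>
    ∑' j, ∑' k, if x j < x k ∧ x k ≤ N T then
      c j * c k / (x j * x k) *
        |Real.sin (T * Real.log (x k / x j)) / (T * Real.log (x k / x j))|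
      else 0 with hoff_def
  have hcnn : ∀ j, 0 ≤ c j := fun j => le_trans (abs_nonneg _) (hbc j)
  -- identify the dominating tsum with a finite double sum
  have hoffid : ∀ T : ℝ, off T = ∑ j ∈ F T, ∑ k ∈ F T, if j < k then w T j k else 0 := by
    intro T
    have hlog : ∀ j k : ℕ, Real.log (x k / x j) = Real.log (x k) - Real.log (x j) :=
      fun j k => Real.log_div (hxpos k).ne' (hxpos j).ne'
    have hinner : ∀ j : ℕ,
        (∑' k, if x j < x k ∧ x k ≤ N T then
          c j * c k / (x j * x k) *
            |Real.sin (T * Real.log (x k / x j)) / (T * Real.log (x k / x j))| else 0)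
        = ∑ k ∈ F T, if x j < x k then w T j k else 0 := by
      intro j
      rw [tsum_eq_sum (s := F T)
        (fun k hk => if_neg (fun hc => hk ((hmem T k).2 hc.2)))]
      refine Finset.sum_congr rfl fun k hk => ?_
      by_cases h : x j < x k
      · rw [if_pos ⟨h, (hmem T k).1 hk⟩, if_pos h, hw_def]
        simp only [hlog]
      · rw [if_neg (fun hc => h hc.1), if_neg h]
    rw [hoff_def]
    simp only []
    rw [tsum_congr hinner]
    have houter : ∀ j ∉ F T, (∑ k ∈ F T, if x j < x k then w T j k else 0) = 0 := by
      intro j hj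
      refine Finset.sum_eq_zero fun k hk => if_neg (not_lt.2 (le_of_lt ?_))
      exact lt_of_le_of_lt ((hmem T k).1 hk) (not_le.1 fun hc => hj ((hmem T j).2 hc))
    rw [tsum_eq_sum (s := F T) houter]
    refine Finset.sum_congr rfl fun j hj => Finset.sum_congr rfl fun k hk => ?_
    exact if_congr hx.lt_iff_lt rfl rfl
  -- termwise absolute bound
  have habs : ∀ (T : ℝ) (j k : ℕ), |e T j k| ≤ w T j k := by
    intro T j k
    rw [he_def, hw_def]
    simp only [abs_mul, abs_div]
    rw [abs_of_pos (hxpos j), abs_of_pos (hxpos k)]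
    gcongr <;> first
      | exact (mul_pos (hxpos j) (hxpos k)).le
      | exact hbc _
      | exact hcnn _
      | exact abs_nonneg _
      | positivity
  -- evenness of the kernel
  have heven : ∀ (T : ℝ) (j k : ℕ), |e T k j| ≤ w T j k := by
    intro T j k
    have h1 : w T k j = w T j k := by
      rw [hw_def]
      simp only []
      rw [mul_comm (c k) (c j), mul_comm (x k) (x j)]
      congr 1
      rw [show T * (Real.log (x j) - Real.log (x k)) =
        -(T * (Real.log (x k) - Real.log (x j))) by ring]
      rw [Real.sin_neg, neg_div_neg_eq]
    rw [← h1]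
    exact habs T k j
  -- |E T| ≤ 2 * off T
  have hEb : ∀ T : ℝ, |E T| ≤ 2 * off T := by
    intro T
    have hsplit : E T = (∑ j ∈ F T, ∑ k ∈ F T, if j < k then e T j k else 0)
        + (∑ j ∈ F T, ∑ k ∈ F T, if k < j then e T j k else 0) := by
      rw [hE_def]
      simp only []
      rw [← Finset.sum_add_distrib]
      refine Finset.sum_congr rfl fun j _ => ?_
      rw [← Finset.sum_add_distrib]
      refine Finset.sum_congr rfl fun k _ => ?_
      rcases lt_trichotomy j k with h|h|h
      · rw [if_neg h.ne, if_pos h, if_neg (asymm h), add_zero]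
      · rw [if_pos h, if_neg (h ▸ lt_irrefl j), if_neg (h ▸ lt_irrefl j), add_zero]
      · rw [if_neg h.ne', if_neg (asymm h), if_pos h, zero_add]
    have hb1 : |∑ j ∈ F T, ∑ k ∈ F T, if j < k then e T j k else 0| ≤ off T := by
      rw [hoffid T]
      calc |∑ j ∈ F T, ∑ k ∈ F T, if j < k then e T j k else 0|
          ≤ ∑ j ∈ F T, |∑ k ∈ F T, if j < k then e T j k else 0| :=
            Finset.abs_sum_le_sum_abs _ _
        _ ≤ ∑ j ∈ F T, ∑ k ∈ F T, if j < k then w T j k else 0 := by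
            refine Finset.sum_le_sum fun j _ => le_trans (Finset.abs_sum_le_sum_abs _ _)
              (Finset.sum_le_sum fun k _ => ?_)
            by_cases h : j < k
            · rw [if_pos h, if_pos h]; exact habs T j k
            · rw [if_neg h, if_neg h, abs_zero]
    have hb2' : |∑ j ∈ F T, ∑ k ∈ F T, if k < j then e T j k else 0| ≤ off T := by
      rw [hoffid T, Finset.sum_comm]
      calc |∑ j ∈ F T, ∑ k ∈ F T, if j < k then e T k j else 0|
          ≤ ∑ j ∈ F T, |∑ k ∈ F T, if j < k then e T k j else 0| :=
            Finset.abs_sum_le_sum_abs _ _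
        _ ≤ ∑ j ∈ F T, ∑ k ∈ F T, if j < k then w T j k else 0 := by
            refine Finset.sum_le_sum fun j _ => le_trans (Finset.abs_sum_le_sum_abs _ _)
              (Finset.sum_le_sum fun k _ => ?_)
            by_cases h : j < k
            · rw [if_pos h, if_pos h]; exact heven T j k
            · rw [if_neg h, if_neg h, abs_zero]
    calc |E T| ≤ |∑ j ∈ F T, ∑ k ∈ F T, if j < k then e T j k else 0|
        + |∑ j ∈ F T, ∑ k ∈ F T, if k < j then e T j k else 0| := by
          rw [hsplit]; exact abs_add_le _ _
      _ ≤ 2 * off T := by linarith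
  have hE0 : Tendsto E atTop (nhds 0) := by
    have h2 : Tendsto (fun T => 2 * off T) atTop (nhds 0) := by
      have := (hoff N hN hNo).const_mul 2
      simpa using this
    exact squeeze_zero_norm' (Filter.Eventually.of_forall fun T => by
      simpa [Real.norm_eq_abs] using hEb T) h2
  -- eventual identity
  have hGid : ∀ᶠ T in atTop,
      (1 / T) * (∫ t in (0:ℝ)..T,
        ‖∑' j, if x j ≤ N T then (b j : ℂ) / (x j : ℂ) ^ ((1 : ℂ) + t * Complex.I)
          else 0‖ ^ 2)
      = (∑ j ∈ F T, b j ^ 2 / x j ^ 2) + E T := by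
    filter_upwards [Filter.eventually_ge_atTop (1:ℝ)] with T hT
    have hT0 : T ≠ 0 := by linarith
    have h1 : (fun t : ℝ => ‖∑' j, if x j ≤ N T then
        (b j : ℂ) / (x j : ℂ) ^ ((1 : ℂ) + t * Complex.I) else 0‖ ^ 2)
        = fun t : ℝ => ‖∑ j ∈ F T, (b j : ℂ) / (x j : ℂ) ^ ((1 : ℂ) + t * Complex.I)‖ ^ 2 := by
      funext t
      have h2 : (∑' j, if x j ≤ N T then
          (b j : ℂ) / (x j : ℂ) ^ ((1 : ℂ) + t * Complex.I) else 0)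
          = ∑ j ∈ F T, (b j : ℂ) / (x j : ℂ) ^ ((1 : ℂ) + t * Complex.I) := by
        rw [tsum_eq_sum (s := F T) (fun j hj => if_neg (fun h => hj ((hmem T j).2 h)))]
        exact Finset.sum_congr rfl fun j hj => if_pos ((hmem T j).1 hj)
      rw [h2]
    rw [h1, stmt18_intkey x b hxpos (F T) T hT0]
    have h3 : ∀ j ∈ F T, ∀ k ∈ F T, (b j * b k) / (x j * x k) *
        (if Real.log (x k) - Real.log (x j) = 0 then 1
         else Real.sin (T * (Real.log (x k) - Real.log (x j))) /
              (T * (Real.log (x k) - Real.log (x j))))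
        = (if j = k then b j ^ 2 / x j ^ 2 else 0) + (if j = k then 0 else e T j k) := by
      intro j _ k _
      by_cases h : j = k
      · subst h
        rw [if_pos rfl, if_pos rfl, if_pos (sub_self _), add_zero, mul_one]
        ring
      · have hne : Real.log (x k) - Real.log (x j) ≠ 0 := by
          refine sub_ne_zero.2 (fun hc => h (hx.injective ?_))
          rw [← Real.exp_log (hxpos j), ← Real.exp_log (hxpos k), hc]
        rw [if_neg hne, if_neg h, if_neg h, zero_add, he_def]
    calc (∑ j ∈ F T, ∑ k ∈ F T, (b j * b k) / (x j * x k) *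
        (if Real.log (x k) - Real.log (x j) = 0 then 1
         else Real.sin (T * (Real.log (x k) - Real.log (x j))) /
              (T * (Real.log (x k) - Real.log (x j)))))
        = ∑ j ∈ F T, ∑ k ∈ F T, ((if j = k then b j ^ 2 / x j ^ 2 else 0)
            + (if j = k then 0 else e T j k)) :=
          Finset.sum_congr rfl fun j hj => Finset.sum_congr rfl fun k hk => h3 j hj k hk
      _ = (∑ j ∈ F T, b j ^ 2 / x j ^ 2) + E T := by
          rw [hE_def]
          simp only [Finset.sum_add_distrib]
          congr 1
          refine Finset.sum_congr rfl fun j hj => ?_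
          rw [Finset.sum_ite_eq (F T) j (fun _ => b j ^ 2 / x j ^ 2), if_pos hj]
  have hfinal : Tendsto (fun T => (∑ j ∈ F T, b j ^ 2 / x j ^ 2) + E T) atTop
      (nhds L) := by
    have := hD.add hE0
    rwa [add_zero] at this
  exact hfinal.congr' (hGid.mono fun T h => h.symm)
end

section
/- For N > e^e, n_0 ≥ e^e, and any sequence a_j > 0 with A(x) = ∑_{n_j ≤ x} a_j = ρx + O(x/(log x)^{3/2+ε}) (ρ, ε > 0), setting R_k = n_k/(log n_k)^{3/2+ε}: ∑_{n_0 < n_j < n_k ≤ N, n_j > n_k − R_k} (a_j a_k)/(n_j n_k) ≪ ∑_{n_k ≥ n_0} a_k/((n_k − R_k)(log n_k)^{3/2+ε}), and the right-hand side tends to 0 as n_0 → ∞. -/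
open Filter Asymptotics


namespace Stmt19

noncomputable def ee : ℝ := Real.exp (Real.exp 1)

lemma two_le_e : (2:ℝ) ≤ Real.exp 1 := by
  have := Real.add_one_le_exp (1:ℝ); linarith

lemma one_le_ee : (1:ℝ) ≤ ee := (Real.one_le_exp_iff).2 (Real.exp_pos 1).le

lemma e_le_log {x : ℝ} (hx : ee ≤ x) : Real.exp 1 ≤ Real.log x := by
  have := Real.log_le_log (Real.exp_pos _) hx
  rwa [Real.log_exp] at this

lemma one_le_log {x : ℝ} (hx : ee ≤ x) : (1:ℝ) ≤ Real.log x :=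
  le_trans (by linarith [two_le_e]) (e_le_log hx)

lemma e_le_logb {x b : ℝ} (hb : 1 ≤ b) (hx : ee ≤ x) :
    Real.exp 1 ≤ Real.log x ^ b :=
  calc Real.exp 1 ≤ Real.log x := e_le_log hx
    _ = Real.log x ^ (1:ℝ) := (Real.rpow_one _).symm
    _ ≤ Real.log x ^ b := Real.rpow_le_rpow_of_exponent_le (one_le_log hx) hb

lemma two_le_logb {x b : ℝ} (hb : 1 ≤ b) (hx : ee ≤ x) : (2:ℝ) ≤ Real.log x ^ b :=
  le_trans two_le_e (e_le_logb hb hx)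

lemma one_le_logb {x b : ℝ} (hb : 1 ≤ b) (hx : ee ≤ x) : (1:ℝ) ≤ Real.log x ^ b := by
  linarith [two_le_logb hb hx]

lemma logb_pos {x b : ℝ} (hb : 1 ≤ b) (hx : ee ≤ x) : (0:ℝ) < Real.log x ^ b := by
  linarith [two_le_logb hb hx]

lemma x_pos {x : ℝ} (hx : ee ≤ x) : (0:ℝ) < x :=
  lt_of_lt_of_le (Real.exp_pos _) hx

/-- `R x = x / (log x)^b ≤ x/2` for `x ≥ e^e`. -/
lemma R_le_half {x b : ℝ} (hb : 1 ≤ b) (hx : ee ≤ x) :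
    x / Real.log x ^ b ≤ x / 2 :=
  div_le_div_of_nonneg_left (x_pos hx).le (by norm_num) (two_le_logb hb hx)

lemma R_pos {x b : ℝ} (hb : 1 ≤ b) (hx : ee ≤ x) : 0 < x / Real.log x ^ b :=
  div_pos (x_pos hx) (logb_pos hb hx)

lemma sub_R_ge {x b : ℝ} (hb : 1 ≤ b) (hx : ee ≤ x) :
    x / 2 ≤ x - x / Real.log x ^ b := by
  linarith [R_le_half hb hx]

lemma sub_R_pos {x b : ℝ} (hb : 1 ≤ b) (hx : ee ≤ x) :
    0 < x - x / Real.log x ^ b :=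
  lt_of_lt_of_le (by linarith [x_pos hx]) (sub_R_ge hb hx)

/-- monotonicity of `x * (log x)^b` on `[e^e, ∞)` -/
lemma xlogb_mono {x y b : ℝ} (hb : 1 ≤ b) (hx : ee ≤ x) (hxy : x ≤ y) :
    x * Real.log x ^ b ≤ y * Real.log y ^ b := by
  have hy : ee ≤ y := le_trans hx hxy
  have h1 : Real.log x ≤ Real.log y := Real.log_le_log (x_pos hx) hxy
  have h2 : Real.log x ^ b ≤ Real.log y ^ b :=
    Real.rpow_le_rpow (by linarith [one_le_log hx]) h1 (by linarith)
  nlinarith [logb_pos hb hx, x_pos hx]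

/-- key MVT inequality: for `e^e ≤ u < v`, with `g t = (log t)^(1-b)`,
  `(v-u) / (v * (log v)^b) ≤ (1/(b-1)) * ((log u)^(1-b) - (log v)^(1-b))`. -/
lemma key_ineq {u v b : ℝ} (hb : 1 < b) (hu : ee ≤ u) (huv : u < v) :
    (v - u) / (v * Real.log v ^ b)
      ≤ (1/(b-1)) * (Real.log u ^ (1-b) - Real.log v ^ (1-b)) := by
  have hv : ee ≤ v := le_trans hu huv.le
  have hup : (0:ℝ) < u := x_pos hu
  have hvp : (0:ℝ) < v := x_pos hv
  -- derivative of g t = (log t)^(1-b) is (1-b) * (log t)^(-b) / t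
  have hderiv : ∀ t ∈ Set.Ioo u v,
      HasDerivAt (fun t => Real.log t ^ (1-b))
        ((1-b) * Real.log t ^ (-b) / t) t := by
    intro t ht
    have htp : ee ≤ t := le_trans hu ht.1.le
    have hlt : (0:ℝ) < Real.log t := by linarith [one_le_log htp]
    have h1 : HasDerivAt Real.log t⁻¹ t := Real.hasDerivAt_log (x_pos htp).ne'
    have h2 : HasDerivAt (fun y : ℝ => y ^ (1-b)) ((1-b) * Real.log t ^ (1-b-1))
        (Real.log t) := Real.hasDerivAt_rpow_const (Or.inl hlt.ne')
    have := h2.comp t h1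
    rw [show (1:ℝ)-b-1 = -b by ring] at this
    exact this.congr_deriv (by ring)
  -- continuity
  have hcont : ContinuousOn (fun t => Real.log t ^ (1-b)) (Set.Icc u v) := by
    apply ContinuousOn.rpow_const
    · apply Real.continuousOn_log.mono
      intro t ht
      simp only [Set.mem_compl_iff, Set.mem_singleton_iff]
      have : ee ≤ t := le_trans hu ht.1
      exact (x_pos this).ne'
    · intro t ht
      left
      have : ee ≤ t := le_trans hu ht.1
      have := one_le_log this
      intro h; rw [h] at this; linarith
  obtain ⟨c, hc, hslope⟩ := exists_hasDerivAt_eq_slope _ _ huv hcont hderiv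
  have hcee : ee ≤ c := le_trans hu hc.1.le
  have hcp : 0 < c := x_pos hcee
  have hlogc : (1:ℝ) ≤ Real.log c := one_le_log hcee
  have hlogv : (1:ℝ) ≤ Real.log v := one_le_log hv
  -- from slope: log u ^ (1-b) - log v ^ (1-b) = (b-1) * (v-u) * log c ^ (-b) / c
  have hslope' : Real.log u ^ (1-b) - Real.log v ^ (1-b)
      = (b-1) * (v - u) * Real.log c ^ (-b) / c := by
    have hvu : v - u ≠ 0 := by linarith
    field_simp at hslope ⊢
    nlinarith [hslope]
  rw [hslope']
  -- now need (v-u)/(v * log v ^ b) ≤ (1/(b-1)) * ((b-1)*(v-u)* log c ^(-b)/c)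
  have hcb : Real.log c ^ (-b) = (Real.log c ^ b)⁻¹ := by
    rw [Real.rpow_neg (by linarith)]
  have h1 : Real.log c ^ b ≤ Real.log v ^ b :=
    Real.rpow_le_rpow (by linarith) (Real.log_le_log hcp hc.2.le) (by linarith)
  have hlcb : (0:ℝ) < Real.log c ^ b := logb_pos hb.le hcee
  have hlvb : (0:ℝ) < Real.log v ^ b := logb_pos hb.le hv
  rw [hcb, div_le_iff₀ (by positivity : (0:ℝ) < v * Real.log v ^ b)] at *
  have key : (v - u) ≤ (v-u) * (Real.log c ^ b)⁻¹ / c * (v * Real.log v ^ b) := by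
    rw [div_mul_eq_mul_div, le_div_iff₀ hcp]
    have h2 : (Real.log c ^ b)⁻¹ * (Real.log v ^ b) ≥ 1 := by
      rw [ge_iff_le, ← div_eq_inv_mul, le_div_iff₀ hlcb]
      simpa using h1
    have hvu : (0:ℝ) ≤ v - u := by linarith
    have h3 : (1:ℝ) ≤ (Real.log c ^ b)⁻¹ * Real.log v ^ b := h2
    calc (v - u) * c ≤ (v-u) * v := mul_le_mul_of_nonneg_left hc.2.le hvu
      _ = (v-u) * v * 1 := by ring
      _ ≤ (v - u) * v * ((Real.log c ^ b)⁻¹ * Real.log v ^ b) := by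
          apply mul_le_mul_of_nonneg_left h3 (by positivity)
      _ = (v - u) * (Real.log c ^ b)⁻¹ * (v * Real.log v ^ b) := by ring
  have heq : 1 / (b-1) * ((b-1) * (v - u) * (Real.log c ^ b)⁻¹ / c)
      = (v - u) * (Real.log c ^ b)⁻¹ / c := by
    have hb1 : b - 1 ≠ 0 := by linarith
    field_simp
  rw [heq]
  exact key


section Aux

variable {n a : ℕ → ℝ}

noncomputable def A (n a : ℕ → ℝ) (x : ℝ) : ℝ := ∑' j, if n j ≤ x then a j else 0

lemma exists_gt (hnt : Tendsto n atTop atTop) (x : ℝ) : ∃ K, ∀ k, K ≤ k → x < n k := by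
  have := hnt.eventually_gt_atTop x
  rw [eventually_atTop] at this
  exact this

lemma summable_ind (hnt : Tendsto n atTop atTop) (x : ℝ) :
    Summable (fun j => if n j ≤ x then a j else 0) := by
  obtain ⟨K, hK⟩ := exists_gt hnt x
  apply summable_of_ne_finset_zero (s := Finset.range K)
  intro j hj
  rw [Finset.mem_range, not_lt] at hj
  simp [not_le.2 (hK j hj)]

lemma A_nonneg (ha : ∀ j, 0 < a j) (x : ℝ) : 0 ≤ A n a x := by
  apply tsum_nonneg
  intro j
  split <;> simp [(ha j).le]

lemma A_mono (hnt : Tendsto n atTop atTop) (ha : ∀ j, 0 < a j) {x y : ℝ} (hxy : x ≤ y) :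
    A n a x ≤ A n a y := by
  apply Summable.tsum_le_tsum _ (summable_ind hnt x) (summable_ind hnt y)
  intro j
  by_cases h : n j ≤ x
  · simp [h, le_trans h hxy]
  · rw [if_neg h]
    split <;> simp [(ha j).le]

lemma sum_le_A_sub (hnt : Tendsto n atTop atTop) (ha : ∀ j, 0 < a j)
    {s : Finset ℕ} {x y : ℝ} (hxy : x ≤ y) (h : ∀ j ∈ s, x < n j ∧ n j ≤ y) :
    ∑ j ∈ s, a j ≤ A n a y - A n a x := by
  have hsub : A n a y - A n a x
      = ∑' j, ((if n j ≤ y then a j else 0) - (if n j ≤ x then a j else 0)) :=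
    (Summable.tsum_sub (summable_ind hnt y) (summable_ind hnt x)).symm
  rw [hsub]
  have hterm : ∀ j ∈ s,
      a j = (if n j ≤ y then a j else 0) - (if n j ≤ x then a j else 0) := by
    intro j hj
    rw [if_pos (h j hj).2, if_neg (not_le.2 (h j hj).1), sub_zero]
  rw [Finset.sum_congr rfl hterm]
  apply Summable.sum_le_tsum
  · intro j hj
    by_cases h1 : n j ≤ x
    · simp [h1, le_trans h1 hxy]
    · rw [if_neg h1]
      split <;> simp [(ha j).le]
  · exact (summable_ind hnt y).sub (summable_ind hnt x)

lemma n_ge_one (hn : StrictMono n) (hn1 : 1 ≤ n 0) (k : ℕ) : 1 ≤ n k :=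
  le_trans hn1 (hn.monotone (Nat.zero_le k))

/-- linear bound on A at the points n k -/
lemma exists_D {ρ ε : ℝ}
    (hn : StrictMono n) (hn1 : 1 ≤ n 0) (hnt : Tendsto n atTop atTop)
    (ha : ∀ j, 0 < a j) (hρ : 0 < ρ) (hε : 0 < ε)
    (hA : (fun x : ℝ => (∑' j, if n j ≤ x then a j else 0) - ρ * x)
      =O[atTop] (fun x : ℝ => x / Real.log x ^ (3 / 2 + ε))) :
    ∃ D : ℝ, 0 < D ∧ ∀ k, A n a (n k) ≤ D * n k := by
  obtain ⟨c, hc, hbig⟩ := hA.exists_pos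
  rw [IsBigOWith, eventually_atTop] at hbig
  obtain ⟨x₀, hx₀⟩ := hbig
  set x₁ : ℝ := max x₀ ee with hx₁
  have hx₁ee : ee ≤ x₁ := le_max_right _ _
  have hB := A_nonneg (n := n) ha x₁
  set B : ℝ := A n a x₁ with hBdef
  refine ⟨ρ + c + B + 1, by positivity, fun k => ?_⟩
  have hnk1 : 1 ≤ n k := n_ge_one hn hn1 k
  by_cases hcase : n k ≤ x₁
  · have h1 : A n a (n k) ≤ B := A_mono hnt ha hcase
    nlinarith
  · push_neg at hcase
    have hee : ee ≤ n k := le_trans hx₁ee hcase.le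
    have h2 := hx₀ (n k) (le_trans (le_max_left _ _) hcase.le)
    have h3 : ‖A n a (n k) - ρ * n k‖ ≤ c * ‖n k / Real.log (n k) ^ (3/2+ε)‖ := h2
    have hb32 : (1:ℝ) ≤ 3/2 + ε := by linarith
    have h4 : ‖n k / Real.log (n k) ^ (3/2+ε)‖ = n k / Real.log (n k) ^ (3/2+ε) := by
      rw [Real.norm_eq_abs, abs_of_pos (R_pos hb32 hee)]
    have h5 : n k / Real.log (n k) ^ (3/2+ε) ≤ n k :=
      le_trans (R_le_half hb32 hee) (by linarith [x_pos hee])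
    rw [Real.norm_eq_abs, h4] at h3
    have h6 := abs_le.1 h3
    nlinarith [x_pos hee]


lemma a_le_A (hnt : Tendsto n atTop atTop) (ha : ∀ j, 0 < a j) (k : ℕ) :
    a k ≤ A n a (n k) := by
  have h := Summable.le_tsum (summable_ind (a := a) hnt (n k)) k
    (fun j _ => by split <;> simp [(ha j).le])
  simpa [A] using h

lemma summable_w {ρ ε : ℝ}
    (hn : StrictMono n) (hn1 : 1 ≤ n 0) (hnt : Tendsto n atTop atTop)
    (ha : ∀ j, 0 < a j) (hρ : 0 < ρ) (hε : 0 < ε)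
    (hA : (fun x : ℝ => (∑' j, if n j ≤ x then a j else 0) - ρ * x)
      =O[atTop] (fun x : ℝ => x / Real.log x ^ (3 / 2 + ε))) :
    Summable (fun k => if ee ≤ n k then
      a k / (n k * Real.log (n k) ^ (3 / 2 + ε)) else 0) := by
  obtain ⟨D, hD, hDk⟩ := exists_D hn hn1 hnt ha hρ hε hA
  set b : ℝ := 3/2 + ε with hbdef
  have hb : 1 < b := by rw [hbdef]; linarith
  have hex : ∃ k, ee ≤ n k := by
    obtain ⟨K, hK⟩ := exists_gt hnt ee; exact ⟨K, (hK K le_rfl).le⟩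
  set k₀ := Nat.find hex with hk₀def
  have hk₀ : ee ≤ n k₀ := Nat.find_spec hex
  have hee_iff : ∀ k, ee ≤ n k ↔ k₀ ≤ k := by
    intro k
    constructor
    · intro h
      by_contra hc
      push_neg at hc
      exact Nat.find_min hex hc h
    · intro h
      exact le_trans hk₀ (hn.monotone h)
  have hnpos : ∀ k, (0:ℝ) < n k := fun k => lt_of_lt_of_le zero_lt_one (n_ge_one hn hn1 k)
  set w : ℕ → ℝ := fun k => (n k * Real.log (n k) ^ b)⁻¹ with hwdef
  have hLpos : ∀ k, k₀ ≤ k → (0:ℝ) < Real.log (n k) ^ b :=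
    fun k hk => logb_pos hb.le ((hee_iff k).2 hk)
  have hwpos : ∀ k, k₀ ≤ k → 0 < w k := by
    intro k hk
    have := hLpos k hk
    have := hnpos k
    rw [hwdef]
    positivity
  have hwmono : ∀ k, k₀ ≤ k → w (k+1) ≤ w k := by
    intro k hk
    have h1 : ee ≤ n k := (hee_iff k).2 hk
    have h2 := xlogb_mono hb.le h1 (hn (Nat.lt_succ_self k)).le
    have hp : (0:ℝ) < n k * Real.log (n k) ^ b :=
      mul_pos (hnpos k) (hLpos k hk)
    exact inv_anti₀ hp h2
  have hid : ∀ k, k₀ ≤ k → n k * w k = (Real.log (n k) ^ b)⁻¹ := by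
    intro k hk
    simp only [hwdef]
    rw [mul_inv, ← mul_assoc, mul_inv_cancel₀ (hnpos k).ne', one_mul]
  set g : ℝ → ℝ := fun x => Real.log x ^ (1-b) with hgdef
  set U : ℕ → ℝ := fun K => (1/(b-1)) * (g (n k₀) - g (n K))
      + ((Real.log (n k₀) ^ b)⁻¹ - (Real.log (n K) ^ b)⁻¹) with hUdef
  have key : ∀ K, k₀ ≤ K →
      ∑ k ∈ Finset.Icc k₀ K, a k * w k ≤ A n a (n K) * w K + D * U K := by
    intro K hK
    induction K, hK using Nat.le_induction with
    | base =>
      rw [Finset.Icc_self, Finset.sum_singleton]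
      have hU0 : U k₀ = 0 := by simp [hUdef]
      rw [hU0, mul_zero, add_zero]
      exact mul_le_mul_of_nonneg_right (a_le_A hnt ha k₀) (hwpos k₀ le_rfl).le
    | succ K hK ih =>
      rw [Finset.sum_Icc_succ_top (le_trans hK (Nat.le_succ K))]
      have h1 : ee ≤ n K := (hee_iff K).2 hK
      have h2 : ee ≤ n (K+1) := (hee_iff (K+1)).2 (le_trans hK (Nat.le_succ K))
      have hw2 : 0 < w (K+1) := hwpos (K+1) (le_trans hK (Nat.le_succ K))
      have ha1 : a (K+1) ≤ A n a (n (K+1)) - A n a (n K) := by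
        have h := sum_le_A_sub (a := a) hnt ha (hn (Nat.lt_succ_self K)).le
          (s := ({K+1} : Finset ℕ)) (fun j hj => by
            rw [Finset.mem_singleton] at hj
            subst hj
            exact ⟨hn (Nat.lt_succ_self K), le_rfl⟩)
        simpa using h
      have P1 : a (K+1) * w (K+1) ≤ (A n a (n (K+1)) - A n a (n K)) * w (K+1) :=
        mul_le_mul_of_nonneg_right ha1 hw2.le
      have hwm := hwmono K hK
      have P2 : A n a (n K) * (w K - w (K+1)) ≤ D * n K * (w K - w (K+1)) :=
        mul_le_mul_of_nonneg_right (hDk K) (by linarith)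
      have P3 : (n (K+1) - n K) * w (K+1) ≤ (1/(b-1)) * (g (n K) - g (n (K+1))) := by
        have hk := key_ineq hb h1 (hn (Nat.lt_succ_self K))
        rw [div_eq_mul_inv] at hk
        exact hk
      have P3' : D * ((n (K+1) - n K) * w (K+1))
          ≤ D * ((1/(b-1)) * (g (n K) - g (n (K+1)))) :=
        mul_le_mul_of_nonneg_left P3 hD.le
      have P4 : D * (n K * w K) = D * (Real.log (n K) ^ b)⁻¹ := by
        rw [hid K hK]
      have P4' : D * (n (K+1) * w (K+1)) = D * (Real.log (n (K+1)) ^ b)⁻¹ := by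
        rw [hid (K+1) (le_trans hK (Nat.le_succ K))]
      simp only [hUdef] at ih ⊢
      nlinarith [ih, P1, P2, P3', P4, P4']
  have hBpos : (0:ℝ) < D * (2 + 1/(b-1)) := by
    have : (0:ℝ) < 1/(b-1) := div_pos one_pos (by linarith)
    nlinarith
  have hbound : ∀ K, k₀ ≤ K →
      ∑ k ∈ Finset.Icc k₀ K, a k * w k ≤ D * (2 + 1/(b-1)) := by
    intro K hK
    have h1 := key K hK
    have hee : ee ≤ n K := (hee_iff K).2 hK
    have hLK : (1:ℝ) ≤ Real.log (n K) ^ b := one_le_logb hb.le hee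
    have hL0 : (1:ℝ) ≤ Real.log (n k₀) ^ b := one_le_logb hb.le hk₀
    have hAw : A n a (n K) * w K ≤ D := by
      calc A n a (n K) * w K ≤ (D * n K) * w K :=
            mul_le_mul_of_nonneg_right (hDk K) (hwpos K hK).le
        _ = D * (n K * w K) := by ring
        _ = D * (Real.log (n K) ^ b)⁻¹ := by rw [hid K hK]
        _ ≤ D * 1 := by
            apply mul_le_mul_of_nonneg_left _ hD.le
            rw [inv_le_one_iff₀]
            right; exact hLK
        _ = D := mul_one D
    have hU : U K ≤ 1/(b-1) + 1 := by
      simp only [hUdef, hgdef]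
      have hg0 : g (n k₀) ≤ 1 :=
        Real.rpow_le_one_of_one_le_of_nonpos (one_le_log hk₀) (by linarith)
      have hg1 : (0:ℝ) ≤ g (n K) := Real.rpow_nonneg (by linarith [one_le_log hee]) _
      have hi0 : (Real.log (n k₀) ^ b)⁻¹ ≤ 1 := by
        rw [inv_le_one_iff₀]; right; exact hL0
      have hi1 : (0:ℝ) ≤ (Real.log (n K) ^ b)⁻¹ := by positivity
      have hbinv : (0:ℝ) < 1/(b-1) := div_pos one_pos (by linarith)
      simp only [hgdef] at hg0 hg1
      nlinarith
    have hDU : D * U K ≤ D * (1/(b-1) + 1) := mul_le_mul_of_nonneg_left hU hD.le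
    calc ∑ k ∈ Finset.Icc k₀ K, a k * w k
        ≤ A n a (n K) * w K + D * U K := h1
      _ ≤ D + D * (1/(b-1) + 1) := add_le_add hAw hDU
      _ = D * (2 + 1/(b-1)) := by ring
  have hnonneg : ∀ k, (0:ℝ) ≤ if ee ≤ n k then
      a k / (n k * Real.log (n k) ^ (3/2+ε)) else 0 := by
    intro k
    by_cases h : ee ≤ n k
    · rw [if_pos h]
      exact div_nonneg (ha k).le (mul_nonneg (hnpos k).le
        (logb_pos (by linarith : (1:ℝ) ≤ 3/2+ε) h).le)
    · rw [if_neg h]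
  apply summable_of_sum_range_le (c := D * (2 + 1/(b-1))) hnonneg
  intro K
  by_cases hK : K ≤ k₀
  · have : ∀ k ∈ Finset.range K, (if ee ≤ n k then
        a k / (n k * Real.log (n k) ^ (3/2+ε)) else 0) = 0 := by
      intro k hk
      rw [Finset.mem_range] at hk
      rw [if_neg]
      rw [hee_iff]
      omega
    rw [Finset.sum_congr rfl this, Finset.sum_const, smul_zero]
    exact hBpos.le
  · push_neg at hK
    obtain ⟨M, rfl⟩ : ∃ M, K = M + 1 := ⟨K - 1, by omega⟩
    have hsub : Finset.Icc k₀ M ⊆ Finset.range (M+1) := by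
      intro k hk
      rw [Finset.mem_Icc] at hk
      rw [Finset.mem_range]
      omega
    have heq : ∑ k ∈ Finset.range (M+1), (if ee ≤ n k then
        a k / (n k * Real.log (n k) ^ (3/2+ε)) else 0)
        = ∑ k ∈ Finset.Icc k₀ M, a k * w k := by
      rw [← Finset.sum_subset hsub]
      · apply Finset.sum_congr rfl
        intro k hk
        rw [Finset.mem_Icc] at hk
        rw [if_pos ((hee_iff k).2 hk.1), div_eq_mul_inv]
      · intro k hkr hk
        rw [Finset.mem_range] at hkr
        rw [Finset.mem_Icc, not_and_or] at hk
        rw [if_neg]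
        rw [hee_iff]
        rcases hk with h | h
        · omega
        · omega
    rw [heq]
    exact hbound M (by omega)


lemma increment {ρ ε : ℝ}
    (hn : StrictMono n) (hn1 : 1 ≤ n 0) (hnt : Tendsto n atTop atTop)
    (ha : ∀ j, 0 < a j) (hρ : 0 < ρ) (hε : 0 < ε)
    (hA : (fun x : ℝ => (∑' j, if n j ≤ x then a j else 0) - ρ * x)
      =O[atTop] (fun x : ℝ => x / Real.log x ^ (3 / 2 + ε))) :
    ∃ C : ℝ, 0 < C ∧ ∀ x, ee ≤ x →
      A n a x - A n a (x - x / Real.log x ^ (3/2+ε))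
        ≤ C * (x / Real.log x ^ (3/2+ε)) := by
  have hb : (1:ℝ) < 3/2 + ε := by linarith
  obtain ⟨c, hc, hbig⟩ := hA.exists_pos
  rw [IsBigOWith, eventually_atTop] at hbig
  obtain ⟨x₀, hx₀⟩ := hbig
  set x₁ : ℝ := max x₀ ee with hx₁def
  have hx₁ee : ee ≤ x₁ := le_max_right _ _
  have hx₁pos : (0:ℝ) < x₁ := x_pos hx₁ee
  have hEbound : ∀ x, x₁ ≤ x → |A n a x - ρ * x| ≤ c * (x / Real.log x ^ (3/2+ε)) := by
    intro x hx
    have hee : ee ≤ x := le_trans hx₁ee hx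
    have h2 := hx₀ x (le_trans (le_max_left _ _) hx)
    have h4 : ‖x / Real.log x ^ (3/2+ε)‖ = x / Real.log x ^ (3/2+ε) := by
      rw [Real.norm_eq_abs, abs_of_pos (R_pos hb.le hee)]
    rwa [Real.norm_eq_abs, h4] at h2
  have h2x₁ : ee ≤ 2 * x₁ := by linarith
  set B : ℝ := A n a (2 * x₁) with hBdef
  have hB0 : 0 ≤ B := A_nonneg ha _
  set c₁ : ℝ := ee / Real.log (2 * x₁) ^ (3/2+ε) with hc₁def
  have hc₁pos : 0 < c₁ := div_pos (x_pos (le_refl ee)) (logb_pos hb.le h2x₁)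
  set θ : ℝ := 1 - (Real.exp 1)⁻¹ with hθdef
  have hθpos : 0 < θ := by
    have h1 : (Real.exp 1)⁻¹ < 1 := by
      rw [inv_lt_one_iff₀]
      right
      linarith [two_le_e]
    rw [hθdef]; linarith
  have hθb : 0 < θ ^ (3/2+ε) := Real.rpow_pos_of_pos hθpos _
  refine ⟨ρ + c + c * (θ ^ (3/2+ε))⁻¹ + B / c₁ + 1, by positivity, fun x hx => ?_⟩
  set L : ℝ := Real.log x ^ (3/2+ε) with hLdef
  set R : ℝ := x / L with hRdef
  clear_value θ B c₁
  have hxpos : 0 < x := x_pos hx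
  have hL2 : (2:ℝ) ≤ L := two_le_logb hb.le hx
  have hRhalf : R ≤ x / 2 := R_le_half hb.le hx
  have hRpos : 0 < R := R_pos hb.le hx
  have hsubpos : 0 < x - R := sub_R_pos hb.le hx
  by_cases hcase : x₁ ≤ x - R
  · -- main case
    have hxx₁ : x₁ ≤ x := le_trans hcase (by linarith)
    have hE1 := hEbound x hxx₁
    have hE2 := hEbound (x - R) hcase
    -- lower bound log (x - R)
    have hlogx : Real.exp 1 ≤ Real.log x := e_le_log hx
    have hlog2 : Real.log 2 ≤ 1 := by
      have := Real.log_le_sub_one_of_pos (by norm_num : (0:ℝ) < 2)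
      linarith
    have hlogxR : θ * Real.log x ≤ Real.log (x - R) := by
      have h1 : Real.log (x/2) ≤ Real.log (x - R) :=
        Real.log_le_log (by linarith) (by linarith)
      rw [Real.log_div hxpos.ne' (by norm_num)] at h1
      have h2 : θ * Real.log x = Real.log x - (Real.exp 1)⁻¹ * Real.log x := by
        rw [hθdef]; ring
      have h3 : (1:ℝ) ≤ (Real.exp 1)⁻¹ * Real.log x := by
        rw [← div_eq_inv_mul, le_div_iff₀ (Real.exp_pos 1)]
        linarith
      linarith
    have hθlx : 0 ≤ θ * Real.log x := mul_nonneg hθpos.le (by linarith [Real.exp_pos 1])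
    have hlogbxR : θ ^ (3/2+ε) * L ≤ Real.log (x - R) ^ (3/2+ε) := by
      have h1 : (θ * Real.log x) ^ (3/2+ε) ≤ Real.log (x - R) ^ (3/2+ε) :=
        Real.rpow_le_rpow hθlx hlogxR (by linarith)
      rwa [Real.mul_rpow hθpos.le (by linarith [Real.exp_pos 1] : (0:ℝ) ≤ Real.log x)] at h1
    have hLpos : (0:ℝ) < L := by linarith
    have hlogbxRpos : (0:ℝ) < Real.log (x - R) ^ (3/2+ε) :=
      lt_of_lt_of_le (by positivity) hlogbxR
    have hfrac : (x - R) / Real.log (x - R) ^ (3/2+ε) ≤ (θ ^ (3/2+ε))⁻¹ * R := by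
      have h1 : (x - R) / Real.log (x - R) ^ (3/2+ε) ≤ (x - R) / (θ ^ (3/2+ε) * L) :=
        div_le_div_of_nonneg_left hsubpos.le (by positivity) hlogbxR
      have h2 : (x - R) / (θ ^ (3/2+ε) * L) ≤ x / (θ ^ (3/2+ε) * L) :=
        div_le_div_of_nonneg_right (by linarith) (mul_pos hθb (by linarith : (0:ℝ) < L)).le
      have h3 : x / (θ ^ (3/2+ε) * L) = (θ ^ (3/2+ε))⁻¹ * R := by
        rw [hRdef]
        field_simp
      linarith
    have hE1' := abs_le.1 hE1
    have hE2' := abs_le.1 hE2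
    have hρR : ρ * x - ρ * (x - R) = ρ * R := by ring
    -- A x - A (x-R) ≤ ρ R + c R + c θ^{-b} R
    have hcθ : 0 ≤ c * (θ ^ (3/2+ε))⁻¹ := by positivity
    have hfin : A n a x - A n a (x - R)
        ≤ ρ * R + c * R + c * ((θ ^ (3/2+ε))⁻¹ * R) := by
      have e1 : A n a x ≤ ρ * x + c * R := by
        have := hE1'.2
        linarith
      have e2 : ρ * (x - R) - c * ((x - R) / Real.log (x - R) ^ (3/2+ε))
          ≤ A n a (x - R) := by
        have := hE2'.1
        linarith
      have e3 : c * ((x - R) / Real.log (x - R) ^ (3/2+ε))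
          ≤ c * ((θ ^ (3/2+ε))⁻¹ * R) := mul_le_mul_of_nonneg_left hfrac hc.le
      linarith
    calc A n a x - A n a (x - R) ≤ ρ * R + c * R + c * ((θ ^ (3/2+ε))⁻¹ * R) := hfin
      _ = (ρ + c + c * (θ ^ (3/2+ε))⁻¹) * R := by ring
      _ ≤ (ρ + c + c * (θ ^ (3/2+ε))⁻¹ + B / c₁ + 1) * R := by
          apply mul_le_mul_of_nonneg_right _ hRpos.le
          have : 0 ≤ B / c₁ := by positivity
          linarith
  · -- bounded case
    push_neg at hcase
    have hx2x₁ : x ≤ 2 * x₁ := by linarith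
    have hAx : A n a x ≤ B := by rw [hBdef]; exact A_mono hnt ha hx2x₁
    have hA0 : 0 ≤ A n a (x - R) := A_nonneg ha _
    have hLle : L ≤ Real.log (2*x₁) ^ (3/2+ε) := by
      apply Real.rpow_le_rpow (by linarith [one_le_log hx]) _ (by linarith)
      exact Real.log_le_log hxpos hx2x₁
    have hRc₁ : c₁ ≤ R := by
      rw [hc₁def, hRdef]
      exact div_le_div₀ (by linarith) hx (lt_of_lt_of_le two_pos hL2) hLle
    have hBc : B ≤ (B / c₁) * R := by
      rw [div_mul_eq_mul_div, le_div_iff₀ hc₁pos]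
      exact mul_le_mul_of_nonneg_left hRc₁ hB0
    have hCR : (B / c₁) * R ≤ (ρ + c + c * (θ ^ (3/2+ε))⁻¹ + B / c₁ + 1) * R := by
      apply mul_le_mul_of_nonneg_right _ hRpos.le
      have h1 : 0 ≤ c * (θ ^ (3/2+ε))⁻¹ := by positivity
      linarith
    linarith


noncomputable def GG (n a : ℕ → ℝ) (ε n₀ : ℝ) (k : ℕ) : ℝ :=
  if n₀ ≤ n k then
    a k / ((n k - n k / Real.log (n k) ^ (3 / 2 + ε))
      * Real.log (n k) ^ (3 / 2 + ε)) else 0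

noncomputable def TT (n a : ℕ → ℝ) (ε N n₀ : ℝ) (j k : ℕ) : ℝ :=
  if n₀ < n j ∧ n j < n k ∧ n k ≤ N ∧
      n k - n k / Real.log (n k) ^ (3 / 2 + ε) < n j then
    a j * a k / (n j * n k) else 0

variable {ε ρ : ℝ}

lemma GG_nonneg (ha : ∀ j, 0 < a j) (hε : 0 < ε) {n₀ : ℝ} (h : ee ≤ n₀) (k : ℕ) :
    0 ≤ GG n a ε n₀ k := by
  rw [GG]
  split
  · rename_i hk
    have hk' : ee ≤ n k := le_trans h hk
    have hb : (1:ℝ) ≤ 3/2 + ε := by linarith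
    exact le_of_lt (div_pos (ha k)
      (mul_pos (sub_R_pos hb hk') (logb_pos hb hk')))
  · exact le_rfl

lemma GG_le (ha : ∀ j, 0 < a j) (hε : 0 < ε) {n₀ : ℝ} (h : ee ≤ n₀) (k : ℕ) :
    GG n a ε n₀ k ≤ GG n a ε ee k := by
  by_cases hk : n₀ ≤ n k
  · have hk' : ee ≤ n k := le_trans h hk
    rw [GG, GG, if_pos hk, if_pos hk']
  · rw [GG, if_neg hk]
    exact GG_nonneg ha hε le_rfl k

lemma GG_summable (hn : StrictMono n) (hn1 : 1 ≤ n 0) (hnt : Tendsto n atTop atTop)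
    (ha : ∀ j, 0 < a j) (hρ : 0 < ρ) (hε : 0 < ε)
    (hA : (fun x : ℝ => (∑' j, if n j ≤ x then a j else 0) - ρ * x)
      =O[atTop] (fun x : ℝ => x / Real.log x ^ (3 / 2 + ε))) :
    Summable (GG n a ε ee) := by
  have hb : (1:ℝ) ≤ 3/2 + ε := by linarith
  have hsw := summable_w hn hn1 hnt ha hρ hε hA
  refine Summable.of_nonneg_of_le (GG_nonneg ha hε le_rfl) (fun k => ?_) (hsw.mul_left 2)
  · rw [GG]
    by_cases hk : ee ≤ n k
    · rw [if_pos hk, if_pos hk]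
      have hnk : 0 < n k := x_pos hk
      have hL : 0 < Real.log (n k) ^ (3/2+ε) := logb_pos hb hk
      have h1 : n k / 2 ≤ n k - n k / Real.log (n k) ^ (3/2+ε) := sub_R_ge hb hk
      have h2 : a k / ((n k - n k / Real.log (n k) ^ (3/2+ε))
            * Real.log (n k) ^ (3/2+ε))
          ≤ a k / ((n k / 2) * Real.log (n k) ^ (3/2+ε)) := by
        apply div_le_div_of_nonneg_left (ha k).le (by positivity)
        exact mul_le_mul_of_nonneg_right h1 hL.le
      have h3 : a k / ((n k / 2) * Real.log (n k) ^ (3/2+ε))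
          = 2 * (a k / (n k * Real.log (n k) ^ (3/2+ε))) := by
        field_simp
      linarith
    · rw [if_neg hk, if_neg hk, mul_zero]

lemma part2 (hn : StrictMono n) (hn1 : 1 ≤ n 0) (hnt : Tendsto n atTop atTop)
    (ha : ∀ j, 0 < a j) (hρ : 0 < ρ) (hε : 0 < ε)
    (hA : (fun x : ℝ => (∑' j, if n j ≤ x then a j else 0) - ρ * x)
      =O[atTop] (fun x : ℝ => x / Real.log x ^ (3 / 2 + ε))) :
    Tendsto (fun n₀ : ℝ => ∑' k, GG n a ε n₀ k) atTop (nhds 0) := by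
  have hb : (1:ℝ) ≤ 3/2 + ε := by linarith
  have hfsum := GG_summable hn hn1 hnt ha hρ hε hA
  set f : ℕ → ℝ := GG n a ε ee with hfdef
  rw [Metric.tendsto_atTop]
  intro δ hδ
  have htail : Tendsto (fun K => ∑' i, f (i + K)) atTop (nhds 0) :=
    tendsto_sum_nat_add f
  obtain ⟨K, hKtail⟩ : ∃ K, ∑' i, f (i + K) < δ := by
    have := (htail.eventually (gt_mem_nhds hδ)).exists
    exact this
  refine ⟨max ee (n K + 1), fun n₀ hn₀ => ?_⟩
  have hn₀ee : ee ≤ n₀ := le_trans (le_max_left _ _) hn₀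
  have hn₀K : n K < n₀ := by
    have := le_max_right ee (n K + 1)
    linarith
  have hgsum : Summable (GG n a ε n₀) :=
    Summable.of_nonneg_of_le (GG_nonneg ha hε hn₀ee) (GG_le ha hε hn₀ee) hfsum
  -- h k := ite (K ≤ k) (f k) 0
  set h : ℕ → ℝ := fun k => if K ≤ k then f k else 0 with hhdef
  have hh_le : ∀ k, h k ≤ f k := by
    intro k
    simp only [hhdef]
    split
    · exact le_rfl
    · exact GG_nonneg ha hε le_rfl k
  have hh_nonneg : ∀ k, 0 ≤ h k := by
    intro k
    simp only [hhdef]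
    split
    · exact GG_nonneg ha hε le_rfl k
    · exact le_rfl
  have hhsum : Summable h := Summable.of_nonneg_of_le hh_nonneg hh_le hfsum
  have hgh : ∀ k, GG n a ε n₀ k ≤ h k := by
    intro k
    by_cases hk : n₀ ≤ n k
    · have h1 : n K < n k := lt_of_lt_of_le hn₀K hk
      have h2 : K ≤ k := le_of_lt (hn.lt_iff_lt.1 h1)
      have hk' : ee ≤ n k := le_trans hn₀ee hk
      rw [hhdef]
      simp only [if_pos h2]
      rw [hfdef]
      exact GG_le ha hε hn₀ee k
    · rw [GG, if_neg hk]
      exact hh_nonneg k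
  have hth : ∑' k, h k = ∑' i, f (i + K) := by
    have h1 := Summable.sum_add_tsum_nat_add K hhsum
    have h2 : ∑ i ∈ Finset.range K, h i = 0 := by
      apply Finset.sum_eq_zero
      intro i hi
      rw [Finset.mem_range] at hi
      rw [hhdef]
      exact if_neg (by omega)
    have h3 : ∑' i, h (i + K) = ∑' i, f (i + K) := by
      apply tsum_congr
      intro i
      rw [hhdef]
      exact if_pos (by omega)
    rw [h2, zero_add, h3] at h1
    exact h1.symm
  have hle : ∑' k, GG n a ε n₀ k ≤ ∑' i, f (i + K) := by
    rw [← hth]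
    exact Summable.tsum_le_tsum hgh hgsum hhsum
  have hge : 0 ≤ ∑' k, GG n a ε n₀ k := tsum_nonneg (GG_nonneg ha hε hn₀ee)
  rw [Real.dist_eq, sub_zero, abs_of_nonneg hge]
  linarith


lemma part1 (hn : StrictMono n) (hn1 : 1 ≤ n 0) (hnt : Tendsto n atTop atTop)
    (ha : ∀ j, 0 < a j) (hρ : 0 < ρ) (hε : 0 < ε)
    (hA : (fun x : ℝ => (∑' j, if n j ≤ x then a j else 0) - ρ * x)
      =O[atTop] (fun x : ℝ => x / Real.log x ^ (3 / 2 + ε))) :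
    ∃ C : ℝ, 0 < C ∧ ∀ N n₀ : ℝ, ee < N → ee ≤ n₀ →
      (∑' j, ∑' k, TT n a ε N n₀ j k) ≤ C * ∑' k, GG n a ε n₀ k := by
  classical
  have hb : (1:ℝ) ≤ 3/2+ε := by linarith
  obtain ⟨C₂, hC₂, hinc⟩ := increment hn hn1 hnt ha hρ hε hA
  have hfsum := GG_summable hn hn1 hnt ha hρ hε hA
  refine ⟨C₂, hC₂, fun N n₀ hN hn₀ => ?_⟩
  obtain ⟨K, hK⟩ := exists_gt hnt N
  have hGsum : Summable (GG n a ε n₀) :=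
    Summable.of_nonneg_of_le (GG_nonneg ha hε hn₀) (GG_le ha hε hn₀) hfsum
  have hT0 : ∀ j k, (K ≤ j ∨ K ≤ k) → TT n a ε N n₀ j k = 0 := by
    intro j k hjk
    rw [TT, if_neg]
    rintro ⟨h1, h2, h3, h4⟩
    rcases hjk with h | h
    · linarith [hK j h]
    · linarith [hK k h]
  have hinner : ∀ j, (∑' k, TT n a ε N n₀ j k)
      = ∑ k ∈ Finset.range K, TT n a ε N n₀ j k := by
    intro j
    apply tsum_eq_sum
    intro k hk
    rw [Finset.mem_range, not_lt] at hk
    exact hT0 j k (Or.inr hk)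
  have hper : ∀ k ∈ Finset.range K,
      ∑ j ∈ Finset.range K, TT n a ε N n₀ j k ≤ C₂ * GG n a ε n₀ k := by
    intro k _
    by_cases hex : ∃ j, n₀ < n j ∧ n j < n k ∧ n k ≤ N ∧
        n k - n k / Real.log (n k) ^ (3/2+ε) < n j
    · obtain ⟨j₀, hj₀⟩ := hex
      have heek : ee ≤ n k := le_trans hn₀ (le_of_lt (lt_trans hj₀.1 hj₀.2.1))
      have hnk0 : n₀ ≤ n k := le_of_lt (lt_trans hj₀.1 hj₀.2.1)
      have hLpos : 0 < Real.log (n k) ^ (3/2+ε) := logb_pos hb heek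
      have hsub : 0 < n k - n k / Real.log (n k) ^ (3/2+ε) := sub_R_pos hb heek
      have hnkpos : 0 < n k := x_pos heek
      set c : ℝ := a k / ((n k - n k / Real.log (n k) ^ (3/2+ε)) * n k) with hcdef
      have hcpos : 0 < c := div_pos (ha k) (mul_pos hsub hnkpos)
      have hTle : ∀ j, TT n a ε N n₀ j k ≤
          (if n₀ < n j ∧ n j < n k ∧ n k ≤ N ∧
            n k - n k / Real.log (n k) ^ (3/2+ε) < n j then a j else 0) * c := by
        intro j
        rw [TT]
        by_cases hc : n₀ < n j ∧ n j < n k ∧ n k ≤ N ∧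
            n k - n k / Real.log (n k) ^ (3/2+ε) < n j
        · rw [if_pos hc, if_pos hc, hcdef]
          have hjpos : 0 < n j := by linarith [x_pos hn₀, hc.1]
          have h1 : a j * a k / (n j * n k)
              ≤ a j * a k / ((n k - n k / Real.log (n k) ^ (3/2+ε)) * n k) := by
            apply div_le_div_of_nonneg_left (mul_pos (ha j) (ha k)).le
              (mul_pos hsub hnkpos)
            exact mul_le_mul_of_nonneg_right hc.2.2.2.le hnkpos.le
          have h2 : a j * a k / ((n k - n k / Real.log (n k) ^ (3/2+ε)) * n k)
              = a j * (a k / ((n k - n k / Real.log (n k) ^ (3/2+ε)) * n k)) := by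
            rw [mul_div_assoc]
          linarith
        · rw [if_neg hc, if_neg hc, zero_mul]
      have hsum1 : ∑ j ∈ Finset.range K, TT n a ε N n₀ j k
          ≤ (∑ j ∈ Finset.range K, if n₀ < n j ∧ n j < n k ∧ n k ≤ N ∧
              n k - n k / Real.log (n k) ^ (3/2+ε) < n j then a j else 0) * c := by
        rw [Finset.sum_mul]
        exact Finset.sum_le_sum (fun j _ => hTle j)
      have hsum2 : (∑ j ∈ Finset.range K, if n₀ < n j ∧ n j < n k ∧ n k ≤ N ∧
              n k - n k / Real.log (n k) ^ (3/2+ε) < n j then a j else 0)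
          ≤ A n a (n k) - A n a (n k - n k / Real.log (n k) ^ (3/2+ε)) := by
        rw [← Finset.sum_filter]
        apply sum_le_A_sub hnt ha
        · linarith [R_pos hb heek]
        · intro j hj
          rw [Finset.mem_filter] at hj
          exact ⟨hj.2.2.2.2, hj.2.2.1.le⟩
      have hsum3 : A n a (n k) - A n a (n k - n k / Real.log (n k) ^ (3/2+ε))
          ≤ C₂ * (n k / Real.log (n k) ^ (3/2+ε)) := hinc (n k) heek
      have hfin : (C₂ * (n k / Real.log (n k) ^ (3/2+ε))) * c
          = C₂ * GG n a ε n₀ k := by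
        rw [GG, if_pos hnk0, hcdef, mul_assoc, div_mul_div_comm]
        congr 1
        rw [div_eq_div_iff (mul_pos hLpos (mul_pos hsub hnkpos)).ne'
          (mul_pos hsub hLpos).ne']
        ring
      calc ∑ j ∈ Finset.range K, TT n a ε N n₀ j k
          ≤ (∑ j ∈ Finset.range K, if n₀ < n j ∧ n j < n k ∧ n k ≤ N ∧
              n k - n k / Real.log (n k) ^ (3/2+ε) < n j then a j else 0) * c := hsum1
        _ ≤ (A n a (n k) - A n a (n k - n k / Real.log (n k) ^ (3/2+ε))) * c :=
            mul_le_mul_of_nonneg_right hsum2 hcpos.le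
        _ ≤ (C₂ * (n k / Real.log (n k) ^ (3/2+ε))) * c :=
            mul_le_mul_of_nonneg_right hsum3 hcpos.le
        _ = C₂ * GG n a ε n₀ k := hfin
    · have hz : ∀ j ∈ Finset.range K, TT n a ε N n₀ j k = 0 := by
        intro j _
        rw [TT, if_neg]
        intro hc
        exact hex ⟨j, hc⟩
      rw [Finset.sum_eq_zero hz]
      exact mul_nonneg hC₂.le (GG_nonneg ha hε hn₀ k)
  calc (∑' j, ∑' k, TT n a ε N n₀ j k)
      = ∑' j, ∑ k ∈ Finset.range K, TT n a ε N n₀ j k := tsum_congr hinner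
    _ = ∑ j ∈ Finset.range K, ∑ k ∈ Finset.range K, TT n a ε N n₀ j k := by
        apply tsum_eq_sum
        intro j hj
        rw [Finset.mem_range, not_lt] at hj
        exact Finset.sum_eq_zero (fun k _ => hT0 j k (Or.inl hj))
    _ = ∑ k ∈ Finset.range K, ∑ j ∈ Finset.range K, TT n a ε N n₀ j k :=
        Finset.sum_comm
    _ ≤ ∑ k ∈ Finset.range K, C₂ * GG n a ε n₀ k := Finset.sum_le_sum hper
    _ = C₂ * ∑ k ∈ Finset.range K, GG n a ε n₀ k := by rw [Finset.mul_sum]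
    _ ≤ C₂ * ∑' k, GG n a ε n₀ k := by
        apply mul_le_mul_of_nonneg_left _ hC₂.le
        exact Summable.sum_le_tsum _ (fun k _ => GG_nonneg ha hε hn₀ k) hGsum

end Aux
end Stmt19



/-- the 'near-diagonal' estimate. With
`A(x) = ∑_{n j ≤ x} a j = ρ x + O(x/(log x)^(3/2+ε))` and
`R k = n k / (log n k)^(3/2+ε)`, for `N > e^e` and `n₀ ≥ e^e`:
`∑_{n₀ < n j < n k ≤ N, n j > n k − R k} (a j a k)/(n j n k)
  ≪ ∑_{n k ≥ n₀} a k/((n k − R k)(log n k)^(3/2+ε))`, and the right-hand side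
tends to `0` as `n₀ → ∞`. -/
theorem stmt_19
    (n a : ℕ → ℝ) (ρ ε : ℝ)
    (hn : StrictMono n) (hn1 : 1 ≤ n 0) (hnt : Tendsto n atTop atTop)
    (ha : ∀ j, 0 < a j) (hρ : 0 < ρ) (hε : 0 < ε)
    (hA : (fun x : ℝ => (∑' j, if n j ≤ x then a j else 0) - ρ * x)
      =O[atTop] (fun x : ℝ => x / Real.log x ^ (3 / 2 + ε))) :
    (∃ C : ℝ, 0 < C ∧ ∀ N n₀ : ℝ, Real.exp (Real.exp 1) < N →
        Real.exp (Real.exp 1) ≤ n₀ →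
        (∑' j, ∑' k, if n₀ < n j ∧ n j < n k ∧ n k ≤ N ∧
              n k - n k / Real.log (n k) ^ (3 / 2 + ε) < n j then
            a j * a k / (n j * n k) else 0)
          ≤ C * ∑' k, if n₀ ≤ n k then
              a k / ((n k - n k / Real.log (n k) ^ (3 / 2 + ε))
                * Real.log (n k) ^ (3 / 2 + ε)) else 0) ∧
    Tendsto (fun n₀ : ℝ =>
        ∑' k, if n₀ ≤ n k then
          a k / ((n k - n k / Real.log (n k) ^ (3 / 2 + ε))
            * Real.log (n k) ^ (3 / 2 + ε)) else 0)
      atTop (nhds 0) := by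
  constructor
  · exact Stmt19.part1 hn hn1 hnt ha hρ hε hA
  · exact Stmt19.part2 hn hn1 hnt ha hρ hε hA
end
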